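/- For every subset D ⊆ F_q with |D| = n and every integer k with 0 < k < n, the covering radius of the Reed–Solomon code RS(D,k) equals n − k. -/

import Mathlib

open Polynomial

/-- The error distance from a word `u` to a code `C`: the minimum Hamming
distance from `u` to a codeword of `C`. -/
noncomputable def errDist {ι F : Type*} [Fintype ι] [DecidableEq F]
    (u : ι → F) (C : Set (ι → F)) : ℕ :=
  sInf {d | ∃ c ∈ C, hammingDist u c = d}

/-- The covering radius of a code `C`: the maximum error distance of a word. -/
noncomputable def covRad {ι F : Type*} [Fintype ι] [DecidableEq F]
    (C : Set (ι → F)) : ℕ :=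
  sSup {d | ∃ u : ι → F, errDist u C = d}

/-- The Reed–Solomon code with evaluation set `D` and dimension `k`:
evaluations of polynomials of degree at most `k - 1` at the points of `D`. -/
def RS {F : Type*} [Field F] (D : Finset F) (k : ℕ) : Set (D → F) :=
  {w | ∃ f : F[X], f.degree < (k : ℕ) ∧ ∀ x : D, w x = f.eval (x : F)}

lemma errDist_RS_le {F : Type*} [Field F] [Fintype F] [DecidableEq F]
    (D : Finset F) (k : ℕ) (hkn : k ≤ D.card) (u : D → F) :
    errDist u (RS D k) ≤ D.card - k := by
  classical
  obtain ⟨S, -, hS⟩ := Finset.exists_subset_card_eq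
    (s := (Finset.univ : Finset D)) (n := k)
    (by simpa [Fintype.card_coe] using hkn)
  have hinj : Set.InjOn (fun x : D => (x : F)) S := fun a _ b _ h => Subtype.ext h
  set f := Lagrange.interpolate S (fun x : D => (x : F)) u with hf
  have hdeg : f.degree < (k : ℕ) := by
    have h := Lagrange.degree_interpolate_lt (r := u) (s := S)
      (v := fun x : D => (x : F)) hinj
    rw [hS] at h; exact h
  set c : D → F := fun x => f.eval (x : F) with hc
  have hmem : c ∈ RS D k := ⟨f, hdeg, fun x => rfl⟩
  have hdist : hammingDist u c ≤ D.card - k := by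
    have hsub : ({x | u x ≠ c x} : Finset D) ⊆ Finset.univ \ S := by
      intro x hx
      simp only [Finset.mem_filter, Finset.mem_univ, true_and] at hx
      simp only [Finset.mem_sdiff, Finset.mem_univ, true_and]
      intro hxS
      exact hx ((Lagrange.eval_interpolate_at_node u hinj hxS).symm)
    calc hammingDist u c ≤ (Finset.univ \ S).card := Finset.card_le_card hsub
      _ = D.card - k := by
          rw [Finset.card_sdiff_of_subset (Finset.subset_univ S), hS, Finset.card_univ,
            Fintype.card_coe]
  exact le_trans (Nat.sInf_le ⟨c, hmem, rfl⟩) hdist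

lemma RS_nonempty {F : Type*} [Field F] (D : Finset F) (k : ℕ) (hk : 0 < k) :
    (RS D k).Nonempty :=
  ⟨fun _ => 0, 0, by rw [degree_zero]; exact_mod_cast WithBot.bot_lt_coe k, fun x => by simp⟩

lemma errDist_pow {F : Type*} [Field F] [Fintype F] [DecidableEq F]
    (D : Finset F) (k : ℕ) (hk : 0 < k) (hkn : k < D.card) :
    errDist (fun x : D => (x : F) ^ k) (RS D k) = D.card - k := by
  classical
  set u : D → F := fun x => (x : F) ^ k with hu
  refine le_antisymm (errDist_RS_le D k hkn.le u) ?_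
  have hne : {d | ∃ c ∈ RS D k, hammingDist u c = d}.Nonempty := by
    obtain ⟨c, hc⟩ := RS_nonempty D k hk
    exact ⟨_, c, hc, rfl⟩
  obtain ⟨c, hc, hcd⟩ := Nat.sInf_mem hne
  rw [errDist, ← hcd]
  obtain ⟨f, hdeg, hcf⟩ := hc
  set g : F[X] := X ^ k - f with hg
  have hXk : (X ^ k : F[X]).degree = (k : ℕ) := by simp
  have hgdeg : g.degree = (k : ℕ) := by
    rw [hg, degree_sub_eq_left_of_degree_lt (by rwa [hXk]), hXk]
  have hg0 : g ≠ 0 := fun h => by simp [h] at hgdeg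
  have hA : ({x | u x = c x} : Finset D).card ≤ k := by
    have : ({x | u x = c x} : Finset D).card ≤ g.roots.toFinset.card := by
      apply Finset.card_le_card_of_injOn (fun x : D => (x : F))
      · intro x hx
        simp only [Finset.coe_filter, Finset.mem_coe, Finset.mem_filter, Finset.mem_univ, true_and, Set.mem_setOf_eq] at hx ⊢
        rw [Multiset.mem_toFinset, mem_roots hg0]
        rw [hg, IsRoot.def]
        simp only [eval_sub, eval_pow, eval_X, sub_eq_zero]
        rw [← hcf x]; exact hx
      · intro a _ b _ h; exact Subtype.ext h
    refine this.trans ?_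
    calc g.roots.toFinset.card ≤ Multiset.card g.roots := g.roots.toFinset_card_le
      _ ≤ g.natDegree := card_roots' g
      _ = k := natDegree_eq_of_degree_eq_some hgdeg
  have hset : ({x | u x ≠ c x} : Finset D) = Finset.univ \ ({x | u x = c x} : Finset D) := by
    ext x; simp
  have : hammingDist u c = (Finset.univ \ ({x | u x = c x} : Finset D)).card := by
    rw [hammingDist, hset]
  rw [this, Finset.card_sdiff_of_subset (Finset.subset_univ _), Finset.card_univ, Fintype.card_coe]
  omega

/-- The covering radius of `RS(D, k)` is `|D| - k`. -/
theorem stmt0 {F : Type*} [Field F] [Fintype F] [DecidableEq F]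
    (D : Finset F) (k : ℕ) (hk : 0 < k) (hkn : k < D.card) :
    covRad (RS D k) = D.card - k := by
  have hmem : D.card - k ∈ {d | ∃ u : D → F, errDist u (RS D k) = d} :=
    ⟨_, errDist_pow D k hk hkn⟩
  have hbdd : ∀ d ∈ {d | ∃ u : D → F, errDist u (RS D k) = d}, d ≤ D.card - k := by
    rintro d ⟨u, rfl⟩
    exact errDist_RS_le D k hkn.le u
  exact le_antisymm (csSup_le ⟨_, hmem⟩ hbdd) (le_csSup ⟨D.card - k, hbdd⟩ hmem)
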